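/- Let k ≥ 2 and ℓ be integers with 2(2k+1) < ℓ. Then for every real z with 1 ≤ z ≤ ℓ−1, sin(2kzπ/ℓ)/sin(zπ/ℓ) − 1 < sin((2k+1)π/ℓ)/sin(π/ℓ). [This is the inequality −h(z) < Dim(□) needed because the categorical dimension is only determined up to sign by the braiding eigenvalues.] -/

import Mathlib

open Real

lemma aux_sin_concave (a b : ℝ) (ha : 0 ≤ a) (hab : a ≤ b) (hb : b ≤ π) :
    a * Real.sin b ≤ b * Real.sin a := by
  rcases eq_or_lt_of_le (ha.trans hab) with h0 | hb0
  · simp [← h0]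
  have key := strictConcaveOn_sin_Icc.concaveOn.2 (x := 0) (y := b)
      ⟨le_refl 0, Real.pi_pos.le⟩ ⟨ha.trans hab, hb⟩
      (show (0:ℝ) ≤ 1 - a / b by rw [sub_nonneg]; exact div_le_one_of_le₀ hab hb0.le)
      (div_nonneg ha hb0.le) (by ring)
  simp only [smul_eq_mul, mul_zero, Real.sin_zero, zero_add, add_zero] at key
  rw [div_mul_cancel₀ _ hb0.ne'] at key
  calc a * Real.sin b = b * (a / b * Real.sin b) := by field_simp
  _ ≤ b * Real.sin a := by
      have := mul_le_mul_of_nonneg_left key hb0.le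
      linarith

set_option maxHeartbeats 2000000 in
theorem typeBC_neg_dim_lt_positive_character (k ℓ : ℕ) (hk : 2 ≤ k)
    (hℓ : 2 * (2 * k + 1) < ℓ) (z : ℝ) (hz1 : 1 ≤ z) (hz2 : z ≤ (ℓ : ℝ) - 1) :
    Real.sin (2 * k * z * Real.pi / ℓ) / Real.sin (z * Real.pi / ℓ) - 1 <
      Real.sin ((2 * k + 1) * Real.pi / ℓ) / Real.sin (Real.pi / ℓ) := by
  have hπ : 0 < π := Real.pi_pos
  have hπ4 : π ≤ 4 := Real.pi_le_four
  have hπ315 : π < 3.15 := Real.pi_lt_d2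
  set L : ℝ := (ℓ:ℝ) with hLdef
  set M : ℝ := 2 * (k:ℝ) with hMdef
  have hM4 : (4:ℝ) ≤ M := by
    have : (2:ℝ) ≤ (k:ℝ) := by exact_mod_cast hk
    rw [hMdef]; linarith
  have hM0 : (0:ℝ) < M := by linarith
  have hLM : 2 * (M + 1) < L := by
    have h := (Nat.cast_lt (α := ℝ)).2 hℓ
    push_cast at h
    rw [hMdef, hLdef]; linarith
  have hL0 : (0:ℝ) < L := by linarith
  set t : ℝ := π / L with htdef
  set y : ℝ := z * π / L with hydef
  have ht0 : 0 < t := div_pos hπ hL0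
  have hty : t ≤ y := by
    rw [htdef, hydef, div_le_div_iff₀ hL0 hL0]
    linarith [mul_le_mul_of_nonneg_right (le_mul_of_one_le_left hπ.le hz1) hL0.le]
  have hy0 : 0 < y := lt_of_lt_of_le ht0 hty
  have hyπt : y ≤ π - t := by
    have e1 : (π - t) * L = π * L - π := by rw [htdef]; field_simp
    rw [hydef, div_le_iff₀ hL0, e1]
    linarith [mul_le_mul_of_nonneg_right hz2 hπ.le]
  have hyπ : y < π := by linarith
  have hsy : 0 < Real.sin y := Real.sin_pos_of_pos_of_lt_pi hy0 hyπ
  have htπ : t < π := by linarith [hty, hyπt, ht0]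
  have hst : 0 < Real.sin t := Real.sin_pos_of_pos_of_lt_pi ht0 htπ
  have hst_le : Real.sin t ≤ t := Real.sin_le ht0.le
  have hu2 : (M + 1) * t ≤ π / 2 := by
    rw [htdef]
    rw [mul_div_assoc']  -- (M+1)*π/L
    rw [div_le_div_iff₀ hL0 two_pos]
    linarith [mul_le_mul_of_nonneg_right hLM.le hπ.le]
  have hu0 : 0 ≤ (M + 1) * t := by positivity
  -- rewrite the goal
  have e2 : M * z * π / L = M * y := by rw [hydef]; ring
  have e3 : (M + 1) * π / L = (M + 1) * t := by rw [htdef]; ring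
  rw [e2, e3]
  set D : ℝ := Real.sin ((M + 1) * t) / Real.sin t with hDdef
  have hsu0 : 0 ≤ Real.sin ((M + 1) * t) :=
    Real.sin_nonneg_of_nonneg_of_le_pi hu0 (by linarith)
  have hD0 : 0 ≤ D := div_nonneg hsu0 hst.le
  have hDM : M / 2 ≤ D := by
    have h1 : 2 / π * ((M + 1) * t) ≤ Real.sin ((M + 1) * t) := Real.mul_le_sin hu0 hu2
    have hDlb : 2 / π * (M + 1) ≤ D := by
      rw [hDdef, le_div_iff₀ hst]
      calc 2 / π * (M + 1) * Real.sin t ≤ 2 / π * (M + 1) * t := by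
            exact mul_le_mul_of_nonneg_left hst_le (by positivity)
        _ = 2 / π * ((M + 1) * t) := by ring
        _ ≤ Real.sin ((M + 1) * t) := h1
    have hq : M / 2 ≤ 2 / π * (M + 1) := by
      have h2 : 2 / π * (M + 1) = 2 * (M + 1) / π := by ring
      rw [h2, div_le_div_iff₀ two_pos hπ]
      linarith [mul_le_mul_of_nonneg_left hπ4 hM0.le]
    linarith
  rw [sub_lt_iff_lt_add, div_lt_iff₀ hsy]
  -- main goal : sin (M*y) < (D + 1) * sin y
  rcases le_or_gt y (π / M) with hcase | hcase
  · -- Case A : y ≤ π / M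
    have hMyπ : M * y ≤ π := by
      rw [le_div_iff₀ hM0] at hcase; linarith [hcase]
    have hMt0 : 0 < M * t := by positivity
    have hMtMy : M * t ≤ M * y := mul_le_mul_of_nonneg_left hty hM0.le
    have h1 : (M * t) * Real.sin (M * y) ≤ (M * y) * Real.sin (M * t) :=
      aux_sin_concave _ _ hMt0.le hMtMy hMyπ
    set E : ℝ := Real.sin (M * t) / Real.sin t with hEdef
    have hSMt0 : 0 ≤ Real.sin (M * t) :=
      Real.sin_nonneg_of_nonneg_of_le_pi hMt0.le (by linarith [hu2, ht0, hπ])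
    have hE0 : 0 ≤ E := div_nonneg hSMt0 hst.le
    have hES : E * Real.sin t = Real.sin (M * t) := div_mul_cancel₀ _ hst.ne'
    have hEM : E ≤ M := by
      have h2 : t * Real.sin (M * t) ≤ (M * t) * Real.sin t :=
        aux_sin_concave t (M * t) ht0.le (by linarith [mul_le_mul_of_nonneg_right hM4 ht0.le, ht0]) (by linarith [hu2, ht0, hπ])
      rw [hEdef, div_le_iff₀ hst]
      by_contra hcon
      push_neg at hcon
      have h3 := mul_lt_mul_of_pos_left hcon ht0
      nlinarith [h2, h3]
    have chain1 : Real.sin (M * y) ≤ E * y := by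
      have c1 : (M * t) * Real.sin (M * y) ≤ (M * t) * (E * y) := by
        calc (M * t) * Real.sin (M * y) ≤ (M * y) * Real.sin (M * t) := h1
          _ = (M * y) * (E * Real.sin t) := by rw [hES]
          _ ≤ (M * y) * (E * t) := by
              apply mul_le_mul_of_nonneg_left _ (by positivity)
              exact mul_le_mul_of_nonneg_left hst_le hE0
          _ = (M * t) * (E * y) := by ring
      exact le_of_mul_le_mul_left c1 hMt0
    have hyq : y ≤ π / 4 := hcase.trans (by
      apply div_le_div_of_nonneg_left hπ.le four_pos hM4)
    have hy1 : y ≤ 1 := by linarith [hπ315]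
    have hcube : y - y ^ 3 / 4 < Real.sin y := by
      have := Real.sin_gt_sub_cube hy0
      linarith [pow_pos hy0 3]
    have hjordan : 2 / π * y ≤ Real.sin y := Real.mul_le_sin hy0.le (by linarith)
    have hys0 : 0 ≤ y - Real.sin y := by linarith [Real.sin_le hy0.le]
    have chain2 : E * y < (E + 1) * Real.sin y := by
      have s1 : E * (y - Real.sin y) ≤ M * (y ^ 3 / 4) := by
        calc E * (y - Real.sin y) ≤ M * (y - Real.sin y) :=
              mul_le_mul_of_nonneg_right hEM hys0
          _ ≤ M * (y ^ 3 / 4) := mul_le_mul_of_nonneg_left (by linarith) hM0.le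
      have s2 : M * (y ^ 3 / 4) ≤ π ^ 2 / 16 * y := by
        linarith [mul_le_mul_of_nonneg_right hMyπ (sq_nonneg y),
          mul_le_mul_of_nonneg_left hyq (le_of_lt (mul_pos hπ hy0))]
      have s3 : π ^ 2 / 16 * y < Real.sin y := by
        have hc : π ^ 3 < 32 := by
          calc π ^ 3 < 3.15 ^ 3 := by
                exact pow_lt_pow_left₀ hπ315 hπ.le (by norm_num)
            _ ≤ 32 := by norm_num
        have h4 : π ^ 2 / 16 * y < 2 / π * y := by
          apply mul_lt_mul_of_pos_right _ hy0
          rw [div_lt_div_iff₀ (by norm_num : (0:ℝ) < 16) hπ]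
          linarith [hc]
        linarith
      linarith [s1, s2, s3]
    have hED : E ≤ D := by
      have hmono :=
        Real.strictMonoOn_sin.monotoneOn (a := M * t) (b := (M + 1) * t)
          ⟨by linarith [hMt0], by linarith [hu2, ht0]⟩
          ⟨by linarith [hu0, hπ], hu2⟩ (by linarith [ht0])
      rw [hEdef, hDdef]
      exact (div_le_div_iff_of_pos_right hst).2 hmono
    calc Real.sin (M * y) ≤ E * y := chain1
      _ < (E + 1) * Real.sin y := chain2
      _ ≤ (D + 1) * Real.sin y := mul_le_mul_of_nonneg_right (by linarith) hsy.le
  · -- y > π / M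
    have key1 : ∀ w : ℝ, 0 < w → w ≤ π / 2 → π < M * w → 1 < (D + 1) * Real.sin w := by
      intro w hw0 hw2 hMw
      have hjw : 2 / π * w ≤ Real.sin w := Real.mul_le_sin hw0.le hw2
      have e4 : 2 / π * π = 2 := by field_simp
      have h2M : 2 < Real.sin w * M := by
        have hh1 : (2 / π * w) * M ≤ Real.sin w * M :=
          mul_le_mul_of_nonneg_right hjw hM0.le
        have hh2 : 2 / π * π < 2 / π * (M * w) :=
          mul_lt_mul_of_pos_left hMw (by positivity)
        linarith [hh1, hh2, e4]
      have h5 : (D + 1) * 2 < (D + 1) * (Real.sin w * M) :=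
        mul_lt_mul_of_pos_left h2M (by linarith)
      have hstep : M * 1 < M * ((D + 1) * Real.sin w) := by linarith [h5, hDM]
      exact lt_of_mul_lt_mul_left hstep hM0.le
    rcases le_or_gt y (π / 2) with hc2 | hc2
    · -- Case B
      have hMy : π < M * y := by rw [div_lt_iff₀ hM0] at hcase; linarith [hcase]
      calc Real.sin (M * y) ≤ 1 := Real.sin_le_one _
        _ < (D + 1) * Real.sin y := key1 y hy0 hc2 hMy
    · -- Case C : y > π / 2
      have hw0 : 0 < π - y := by linarith [hyπt, ht0]
      have hwt : t ≤ π - y := by linarith [hyπt]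
      have hw2 : π - y ≤ π / 2 := by linarith
      have hsyw : Real.sin (π - y) = Real.sin y := Real.sin_pi_sub y
      have hMyw : Real.sin (M * y) = -Real.sin (M * (π - y)) := by
        have e5 : M * y = (k : ℝ) * (2 * π) - M * (π - y) := by rw [hMdef]; ring
        have c1 : Real.sin ((k : ℝ) * (2 * π)) = 0 := by
          have h := Real.sin_nat_mul_pi (2 * k)
          push_cast at h
          rw [show (k:ℝ) * (2 * π) = 2 * (k:ℝ) * π by ring]
          exact h
        rw [e5, Real.sin_sub, c1, Real.cos_nat_mul_two_pi k]
        ring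
      rcases le_or_gt 0 (Real.sin (M * (π - y))) with hpos | hneg
      · have hneg2 : Real.sin (M * y) ≤ 0 := by rw [hMyw]; linarith
        have hpos2 : 0 < (D + 1) * Real.sin y := mul_pos (by linarith) hsy
        linarith
      · have hMw : π < M * (π - y) := by
          by_contra hcon
          push_neg at hcon
          exact absurd (Real.sin_nonneg_of_nonneg_of_le_pi
            (by positivity) hcon) (not_le.2 hneg)
        have hfin := key1 (π - y) hw0 hw2 hMw
        rw [hsyw] at hfin
        calc Real.sin (M * y) ≤ 1 := Real.sin_le_one _
          _ < (D + 1) * Real.sin y := hfin
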